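/- Let d ≥ 5 and ν ≥ 1/(2d). Then there is a constant K depending only on d such that for every m ≥ 2 and x ∈ ℤ^d, ∑_{k+l+j=m, l,j≥1, k≥0} φ_{kν}(x)φ_{lν}(x)φ_{jν}(x) ≤ K·m^{−d/2}·∑_{k=1}^{⌊m/2⌋} k^{1−d/2} φ_{kν}(x), where φ_0(x) := δ_{0,x} and φ_η(x) = (2πη)^{−d/2}exp(−|x|²/(2η)) for η > 0. -/

import Mathlib

/-- The centered Gaussian density on `ℝ^d` with covariance `η·Id`, evaluated at lattice
points, extended by the Dirac delta at `η = 0`. -/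
noncomputable def gauss' (d : ℕ) (η : ℝ) (x : Fin d → ℤ) : ℝ :=
  if η = 0 then (if x = 0 then 1 else 0)
  else (2 * Real.pi * η) ^ (-(d : ℝ) / 2) * Real.exp (-(∑ i, ((x i : ℝ)) ^ 2) / (2 * η))

/- ---------------------------------------------------------------------------
Auxiliary lemmas
--------------------------------------------------------------------------- -/

/-- Summing `f` over an injected copy of a set is at most summing over a superset. -/
lemma sum_le_sum_inj (f : ℕ → ℝ) (hf : ∀ b, 0 ≤ f b) (t T : Finset ℕ) (e : ℕ → ℕ)
    (he : ∀ a ∈ t, ∀ b ∈ t, e a = e b → a = b) (hmem : ∀ a ∈ t, e a ∈ T) :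
    ∑ i ∈ t, f (e i) ≤ ∑ b ∈ T, f b := by
  rw [← Finset.sum_image he]
  exact Finset.sum_le_sum_of_subset_of_nonneg (Finset.image_subset_iff.mpr hmem)
    (fun b _ _ => hf b)

/-- Pointwise comparison of `x^(-(p+1))` with a telescoping difference. -/
lemma key_real {p x : ℝ} (hp : 1 ≤ p) (hx : 1 ≤ x) :
    x ^ (-(p + 1)) ≤ ((p + 1) / p) * (x ^ (-p) - (x + 1) ^ (-p)) := by
  have hx0 : (0 : ℝ) < x := by linarith
  have hp0 : (0 : ℝ) < p := by linarith
  have hw : 1 + p * (1 / x) ≤ (1 + 1 / x) ^ p :=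
    one_add_mul_self_le_rpow_one_add (le_trans (by norm_num : (-1:ℝ) ≤ 0) (by positivity : (0:ℝ) ≤ 1/x)) hp
  have hY : (x + 1) ^ p = x ^ p * (1 + 1 / x) ^ p := by
    rw [← Real.mul_rpow hx0.le (by positivity)]
    congr 1
    field_simp
  have hXpos : 0 < x ^ p := Real.rpow_pos_of_pos hx0 p
  have hwpos : (0:ℝ) < (1 + 1/x) ^ p := Real.rpow_pos_of_pos (by positivity) p
  have h1 : x ^ (-(p + 1)) = (x ^ p * x)⁻¹ := by
    rw [Real.rpow_neg hx0.le, Real.rpow_add hx0, Real.rpow_one]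
  have h2 : x ^ (-p) = (x ^ p)⁻¹ := by rw [Real.rpow_neg hx0.le]
  have h3 : (x + 1) ^ (-p) = (x ^ p * (1 + 1/x) ^ p)⁻¹ := by
    rw [Real.rpow_neg (by positivity), hY]
  rw [h1, h2, h3]
  set X := x ^ p with hX
  set w := (1 + 1/x) ^ p with hW
  have hw1 : 1 + p / x ≤ w := by rwa [mul_one_div] at hw
  have hwgt1 : 1 < w := by
    have : 0 < p / x := by positivity
    linarith
  -- the key polynomial inequality : p * w ≤ (p+1) * (w-1) * x
  have hxw : p ≤ x * (w - 1) := by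
    have h4 : p / x ≤ w - 1 := by linarith
    have := mul_le_mul_of_nonneg_left h4 hx0.le
    rwa [mul_div_cancel₀ p (ne_of_gt hx0)] at this
  have hkey : p * w ≤ (p + 1) * (w - 1) * x := by
    have h5 : p * (w - 1) ≤ p * (x * (w - 1)) := by
      have : x * (w - 1) ≥ 1 * (w - 1) := by
        apply mul_le_mul_of_nonneg_right hx (by linarith)
      nlinarith [hwgt1]
    nlinarith [hxw, hwgt1]
  have expand : (p + 1) / p * ((X)⁻¹ - (X * w)⁻¹) - (X * x)⁻¹
      = ((p + 1) * (w - 1) * x - p * w) / (p * X * w * x) := by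
    field_simp
  have hnum : 0 ≤ ((p + 1) * (w - 1) * x - p * w) / (p * X * w * x) := by
    apply div_nonneg (by linarith) (by positivity)
  linarith [expand ▸ hnum]

/-- Telescoping sum over `Icc a N`. -/
lemma telescope_eq (f : ℕ → ℝ) (a : ℕ) (ha : 1 ≤ a) :
    ∀ N : ℕ, a ≤ N + 1 → ∑ b ∈ Finset.Icc a N, (f b - f (b + 1)) = f a - f (N + 1) := by
  intro N
  induction N with
  | zero =>
    intro h
    have : a = 1 := by omega
    subst this
    simp
  | succ N ih =>
    intro h
    by_cases h' : a ≤ N + 1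
    · rw [Finset.sum_Icc_succ_top h', ih h']
      ring
    · have : a = N + 2 := by omega
      subst this
      rw [show N + 1 + 1 = N + 2 from rfl, Finset.Icc_eq_empty (by omega)]
      simp

/-- The tail bound `∑_{b=a}^N b^(-d/2) ≤ C a^(1-d/2)`. -/
lemma tail_bound (d : ℕ) (hd : 5 ≤ d) :
    ∃ C : ℝ, 1 ≤ C ∧ ∀ a N : ℕ, 1 ≤ a →
      ∑ b ∈ Finset.Icc a N, (b : ℝ) ^ (-((d : ℝ) / 2)) ≤ C * (a : ℝ) ^ (1 - (d : ℝ) / 2) := by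
  have hd5 : (5 : ℝ) ≤ (d : ℝ) := by exact_mod_cast hd
  set s : ℝ := (d : ℝ) / 2 with hs_def
  have hs : (5 : ℝ) / 2 ≤ s := by rw [hs_def]; linarith
  set p : ℝ := s - 1 with hp_def
  have hp : (1 : ℝ) ≤ p := by rw [hp_def]; linarith
  have hp0 : (0 : ℝ) < p := by linarith
  refine ⟨(p + 1) / p, ?_, ?_⟩
  · rw [le_div_iff₀ hp0]; linarith
  intro a N ha
  have hcnn : (0:ℝ) ≤ (p+1)/p := by positivity
  set f : ℕ → ℝ := fun n => (n : ℝ) ^ (1 - s) with hf_def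
  have hfnn : ∀ n : ℕ, 0 ≤ f n := fun n => Real.rpow_nonneg (Nat.cast_nonneg n) _
  have hkey : ∀ b ∈ Finset.Icc a N, (b : ℝ) ^ (-s) ≤ ((p + 1) / p) * (f b - f (b + 1)) := by
    intro b hb
    have hb1 : 1 ≤ b := le_trans ha (Finset.mem_Icc.mp hb).1
    have hxb : (1 : ℝ) ≤ (b : ℝ) := by exact_mod_cast hb1
    have hk := key_real hp hxb
    have e1 : -(p + 1) = -s := by rw [hp_def]; ring
    have e2 : -p = 1 - s := by rw [hp_def]; ring
    have e3 : ((b : ℝ) + 1) = ((b + 1 : ℕ) : ℝ) := by push_cast; ring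
    rw [e1, e2, e3] at hk
    exact hk
  calc ∑ b ∈ Finset.Icc a N, (b : ℝ) ^ (-s)
      ≤ ∑ b ∈ Finset.Icc a N, ((p + 1) / p) * (f b - f (b + 1)) :=
        Finset.sum_le_sum hkey
    _ = ((p + 1) / p) * ∑ b ∈ Finset.Icc a N, (f b - f (b + 1)) := by
        rw [Finset.mul_sum]
    _ ≤ ((p + 1) / p) * f a := by
        apply mul_le_mul_of_nonneg_left _ hcnn
        by_cases hN : a ≤ N + 1
        · rw [telescope_eq f a ha N hN]
          have := hfnn (N + 1)
          linarith
        · have : Finset.Icc a N = ∅ := by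
            apply Finset.Icc_eq_empty
            omega
          rw [this]
          simpa using hfnn a
    _ = ((p + 1) / p) * (a : ℝ) ^ (1 - s) := rfl

/- Gaussian basics. -/

lemma gauss'_nonneg (d : ℕ) {η : ℝ} (hη : 0 ≤ η) (x : Fin d → ℤ) : 0 ≤ gauss' d η x := by
  unfold gauss'
  split
  · split <;> norm_num
  · have h2 : (0 : ℝ) ≤ 2 * Real.pi * η :=
      mul_nonneg (by positivity) hη
    exact mul_nonneg (Real.rpow_nonneg h2 _) (Real.exp_nonneg _)

lemma gauss'_le (d : ℕ) {η : ℝ} (hη : 0 < η) (x : Fin d → ℤ) :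
    gauss' d η x ≤ (2 * Real.pi * η) ^ (-(d : ℝ) / 2) := by
  unfold gauss'
  rw [if_neg (ne_of_gt hη)]
  have hb : (0 : ℝ) ≤ (2 * Real.pi * η) ^ (-(d : ℝ) / 2) :=
    Real.rpow_nonneg (by positivity) _
  have h1 : Real.exp (-(∑ i, ((x i : ℝ)) ^ 2) / (2 * η)) ≤ 1 := by
    rw [Real.exp_le_one_iff]
    have hss : (0 : ℝ) ≤ ∑ i, ((x i : ℝ)) ^ 2 := by positivity
    apply div_nonpos_of_nonpos_of_nonneg (by linarith) (by linarith)
  calc (2 * Real.pi * η) ^ (-(d : ℝ) / 2) * Real.exp (-(∑ i, ((x i : ℝ)) ^ 2) / (2 * η))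
      ≤ (2 * Real.pi * η) ^ (-(d : ℝ) / 2) * 1 := mul_le_mul_of_nonneg_left h1 hb
    _ = (2 * Real.pi * η) ^ (-(d : ℝ) / 2) := mul_one _

lemma gauss'_zero_le (d : ℕ) {ν : ℝ} (hν : 0 < ν) (x : Fin d → ℤ) :
    gauss' d 0 x ≤ (2 * Real.pi * ν) ^ ((d : ℝ) / 2) * gauss' d ν x := by
  have h2πν : (0 : ℝ) < 2 * Real.pi * ν := by
    have := Real.pi_pos
    positivity
  unfold gauss'
  rw [if_pos rfl, if_neg (ne_of_gt hν)]
  by_cases hx : x = 0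
  · rw [if_pos hx]
    have hsum : (∑ i, ((x i : ℝ)) ^ 2) = 0 := by subst hx; simp
    rw [hsum]
    rw [neg_zero, zero_div, Real.exp_zero, mul_one]
    rw [← Real.rpow_add h2πν]
    have : (d : ℝ) / 2 + -(d : ℝ) / 2 = 0 := by ring
    rw [this, Real.rpow_zero]
  · rw [if_neg hx]
    have hb : (0 : ℝ) ≤ (2 * Real.pi * ν) ^ ((d : ℝ) / 2) := Real.rpow_nonneg h2πν.le _
    have hg : (0 : ℝ) ≤ (2 * Real.pi * ν) ^ (-(d : ℝ) / 2) * Real.exp (-(∑ i, ((x i : ℝ)) ^ 2) / (2 * ν)) :=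
      mul_nonneg (Real.rpow_nonneg h2πν.le _) (Real.exp_nonneg _)
    positivity

/-- If `m ≤ 3L` or `m ≤ 3J` then `L^{-t} J^{-t} ≤ (3/m)^t (L^{-t} + J^{-t})`. -/
lemma prod_bd {L J m : ℕ} (hL : 1 ≤ L) (hJ : 1 ≤ J) (hm : 1 ≤ m)
    (h : m ≤ 3 * L ∨ m ≤ 3 * J) {t : ℝ} (ht : 0 ≤ t) :
    (L : ℝ) ^ (-t) * (J : ℝ) ^ (-t) ≤ ((3 : ℝ) / m) ^ t * ((L : ℝ) ^ (-t) + (J : ℝ) ^ (-t)) := by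
  have hm0 : (0 : ℝ) < m := by exact_mod_cast hm
  have key : ∀ B : ℕ, 1 ≤ B → m ≤ 3 * B → (B : ℝ) ^ (-t) ≤ ((3 : ℝ) / m) ^ t := by
    intro B hB hmB
    have hB0 : (0 : ℝ) < B := by exact_mod_cast hB
    have h1 : (m : ℝ) / 3 ≤ B := by
      have : (m : ℝ) ≤ 3 * B := by exact_mod_cast hmB
      linarith
    have h2 : ((3 : ℝ) / m) ^ t = ((m : ℝ) / 3) ^ (-t) := by
      rw [Real.rpow_neg (by positivity), ← Real.inv_rpow (by positivity), inv_div]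
    rw [h2]
    exact Real.rpow_le_rpow_of_nonpos (by positivity) h1 (by linarith)
  have hLnn : (0:ℝ) ≤ (L:ℝ) ^ (-t) := Real.rpow_nonneg (Nat.cast_nonneg L) _
  have hJnn : (0:ℝ) ≤ (J:ℝ) ^ (-t) := Real.rpow_nonneg (Nat.cast_nonneg J) _
  rcases h with h | h
  · calc (L : ℝ) ^ (-t) * (J : ℝ) ^ (-t) ≤ ((3 : ℝ) / m) ^ t * (J : ℝ) ^ (-t) :=
        mul_le_mul_of_nonneg_right (key L hL h) hJnn
      _ ≤ ((3 : ℝ) / m) ^ t * ((L : ℝ) ^ (-t) + (J : ℝ) ^ (-t)) := by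
        apply mul_le_mul_of_nonneg_left (by linarith) (Real.rpow_nonneg (by positivity) t)
  · calc (L : ℝ) ^ (-t) * (J : ℝ) ^ (-t) ≤ (L : ℝ) ^ (-t) * ((3 : ℝ) / m) ^ t :=
        mul_le_mul_of_nonneg_left (key J hJ h) hLnn
      _ ≤ ((3 : ℝ) / m) ^ t * ((L : ℝ) ^ (-t) + (J : ℝ) ^ (-t)) := by
        rw [mul_comm]
        apply mul_le_mul_of_nonneg_left (by linarith) (Real.rpow_nonneg (by positivity) t)

/-- The abstract core estimate. -/
lemma core_bound (d : ℕ) (hd : 5 ≤ d) (C : ℝ) (hC1 : 1 ≤ C)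
    (hC : ∀ a N : ℕ, 1 ≤ a →
      ∑ b ∈ Finset.Icc a N, (b : ℝ) ^ (-((d : ℝ) / 2)) ≤ C * (a : ℝ) ^ (1 - (d : ℝ) / 2))
    (m : ℕ) (hm : 2 ≤ m) (G : ℕ → ℝ) (A A₀ : ℝ)
    (hApos : 0 < A) (hA₀1 : 1 ≤ A₀) (hAle : A ≤ A₀)
    (hGnn : ∀ n, 0 ≤ G n)
    (hGle : ∀ n : ℕ, 1 ≤ n → G n ≤ A * (n : ℝ) ^ (-((d : ℝ) / 2)))
    (hG0 : G 0 ≤ A⁻¹ * G 1) :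
    (∑ k ∈ Finset.range m, ∑ l ∈ Finset.Icc 1 (m - 1 - k), G k * G l * G (m - k - l))
      ≤ (A₀ ^ 2 * 3 ^ ((d : ℝ) / 2) * (8 * C + 2)) * (m : ℝ) ^ (-(d : ℝ) / 2) *
          ∑ k ∈ Finset.Icc 1 (m / 2), (k : ℝ) ^ (1 - (d : ℝ) / 2) * G k := by
  set t : ℝ := (d : ℝ) / 2 with ht_def
  have hnt : -(d : ℝ) / 2 = -t := by rw [ht_def, neg_div]
  rw [hnt]
  have ht0 : 0 < t := by
    rw [ht_def]
    have : (0:ℝ) < (d:ℝ) := by exact_mod_cast (by omega : 0 < d)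
    linarith
  have hm0 : (0 : ℝ) < m := by exact_mod_cast (by omega : 0 < m)
  have hA₀pos : 0 < A₀ := by linarith
  have h3m : (0 : ℝ) ≤ ((3 : ℝ) / m) ^ t := Real.rpow_nonneg (by positivity) t
  have hrnn : ∀ n : ℕ, (0:ℝ) ≤ (n : ℝ) ^ (-t) := fun n => Real.rpow_nonneg (Nat.cast_nonneg n) _
  -- the three pieces
  set U1 : ℕ → ℕ → ℝ := fun k l =>
    if (max k 1 ≤ l ∧ max k 1 ≤ m - k - l) then
      G (max k 1) * ((l : ℝ) ^ (-t) + ((m - k - l : ℕ) : ℝ) ^ (-t)) else 0 with hU1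
  set U2 : ℕ → ℕ → ℝ := fun k l =>
    if (l ≤ max k 1 ∧ l ≤ m - k - l) then
      G l * (((max k 1 : ℕ) : ℝ) ^ (-t) + ((m - k - l : ℕ) : ℝ) ^ (-t)) else 0 with hU2
  set U3 : ℕ → ℕ → ℝ := fun k l =>
    if (m - k - l ≤ max k 1 ∧ m - k - l ≤ l) then
      G (m - k - l) * (((max k 1 : ℕ) : ℝ) ^ (-t) + (l : ℝ) ^ (-t)) else 0 with hU3
  have hU1nn : ∀ k l, 0 ≤ U1 k l := by
    intro k l; rw [hU1]; dsimp only; split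
    · exact mul_nonneg (hGnn _) (add_nonneg (hrnn _) (hrnn _))
    · exact le_refl 0
  have hU2nn : ∀ k l, 0 ≤ U2 k l := by
    intro k l; rw [hU2]; dsimp only; split
    · exact mul_nonneg (hGnn _) (add_nonneg (hrnn _) (hrnn _))
    · exact le_refl 0
  have hU3nn : ∀ k l, 0 ≤ U3 k l := by
    intro k l; rw [hU3]; dsimp only; split
    · exact mul_nonneg (hGnn _) (add_nonneg (hrnn _) (hrnn _))
    · exact le_refl 0
  -- master termwise bound
  have master : ∀ k ∈ Finset.range m, ∀ l ∈ Finset.Icc 1 (m - 1 - k),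
      G k * G l * G (m - k - l) ≤ A₀ ^ 2 * ((3 : ℝ) / m) ^ t * (U1 k l + U2 k l + U3 k l) := by
    intro k hk l hl
    have hkm : k < m := Finset.mem_range.mp hk
    obtain ⟨hl1, hl2⟩ := Finset.mem_Icc.mp hl
    have hj1 : 1 ≤ m - k - l := by omega
    have hA2 : A * A ≤ A₀ ^ 2 := by nlinarith
    have hAA₀ : A ≤ A₀ ^ 2 := by nlinarith
    by_cases hk0 : k = 0
    · subst hk0
      have hmax : max 0 1 = 1 := rfl
      have step1 : G 0 * G l * G (m - 0 - l)
          ≤ (A⁻¹ * G 1) * (A * (l : ℝ) ^ (-t)) * (A * ((m - 0 - l : ℕ) : ℝ) ^ (-t)) := by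
        apply mul_le_mul
        · apply mul_le_mul hG0 (hGle l hl1) (hGnn l)
          exact mul_nonneg (by positivity) (hGnn 1)
        · exact hGle _ hj1
        · exact hGnn _
        · apply mul_nonneg (mul_nonneg (by positivity) (hGnn 1))
          exact mul_nonneg hApos.le (hrnn l)
      have step2 : (A⁻¹ * G 1) * (A * (l : ℝ) ^ (-t)) * (A * ((m - 0 - l : ℕ) : ℝ) ^ (-t))
          = A * (G 1 * ((l : ℝ) ^ (-t) * ((m - 0 - l : ℕ) : ℝ) ^ (-t))) := by
        field_simp
      have hprod : (l : ℝ) ^ (-t) * ((m - 0 - l : ℕ) : ℝ) ^ (-t)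
          ≤ ((3 : ℝ) / m) ^ t * ((l : ℝ) ^ (-t) + ((m - 0 - l : ℕ) : ℝ) ^ (-t)) :=
        prod_bd hl1 hj1 (by omega) (by omega) ht0.le
      have hsel : G 1 * ((l : ℝ) ^ (-t) + ((m - 0 - l : ℕ) : ℝ) ^ (-t))
          ≤ U1 0 l + U2 0 l + U3 0 l := by
        have e1 : U1 0 l = G 1 * ((l : ℝ) ^ (-t) + ((m - 0 - l : ℕ) : ℝ) ^ (-t)) := by
          rw [hU1]; dsimp only
          rw [if_pos ⟨by omega, by omega⟩, hmax]
        rw [e1]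
        linarith [hU2nn 0 l, hU3nn 0 l]
      calc G 0 * G l * G (m - 0 - l)
          ≤ A * (G 1 * ((l : ℝ) ^ (-t) * ((m - 0 - l : ℕ) : ℝ) ^ (-t))) := by
            rw [← step2]; exact step1
        _ ≤ A₀ ^ 2 * (G 1 * (((3 : ℝ) / m) ^ t * ((l : ℝ) ^ (-t) + ((m - 0 - l : ℕ) : ℝ) ^ (-t)))) := by
            apply mul_le_mul hAA₀
            · exact mul_le_mul_of_nonneg_left hprod (hGnn 1)
            · exact mul_nonneg (hGnn 1) (mul_nonneg (hrnn _) (hrnn _))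
            · positivity
        _ = A₀ ^ 2 * ((3 : ℝ) / m) ^ t * (G 1 * ((l : ℝ) ^ (-t) + ((m - 0 - l : ℕ) : ℝ) ^ (-t))) := by
            ring
        _ ≤ A₀ ^ 2 * ((3 : ℝ) / m) ^ t * (U1 0 l + U2 0 l + U3 0 l) := by
            apply mul_le_mul_of_nonneg_left hsel
            positivity
    · have hk1 : 1 ≤ k := by omega
      have hmax : max k 1 = k := max_eq_left hk1
      rcases (by omega : (k ≤ l ∧ k ≤ m - k - l) ∨ (l ≤ k ∧ l ≤ m - k - l) ∨
          (m - k - l ≤ k ∧ m - k - l ≤ l)) with ⟨h1, h2⟩ | ⟨h1, h2⟩ | ⟨h1, h2⟩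
      · -- k is minimal
        have hprod : (l : ℝ) ^ (-t) * ((m - k - l : ℕ) : ℝ) ^ (-t)
            ≤ ((3 : ℝ) / m) ^ t * ((l : ℝ) ^ (-t) + ((m - k - l : ℕ) : ℝ) ^ (-t)) :=
          prod_bd hl1 hj1 (by omega) (by omega) ht0.le
        have hsel : G k * ((l : ℝ) ^ (-t) + ((m - k - l : ℕ) : ℝ) ^ (-t))
            ≤ U1 k l + U2 k l + U3 k l := by
          have e1 : U1 k l = G k * ((l : ℝ) ^ (-t) + ((m - k - l : ℕ) : ℝ) ^ (-t)) := by
            rw [hU1]; dsimp only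
            rw [if_pos ⟨by omega, by omega⟩, hmax]
          rw [e1]
          linarith [hU2nn k l, hU3nn k l]
        calc G k * G l * G (m - k - l)
            ≤ G k * (A * (l : ℝ) ^ (-t)) * (A * ((m - k - l : ℕ) : ℝ) ^ (-t)) := by
              apply mul_le_mul
              · exact mul_le_mul_of_nonneg_left (hGle l hl1) (hGnn k)
              · exact hGle _ hj1
              · exact hGnn _
              · exact mul_nonneg (hGnn k) (mul_nonneg hApos.le (hrnn l))
          _ = (A * A) * (G k * ((l : ℝ) ^ (-t) * ((m - k - l : ℕ) : ℝ) ^ (-t))) := by ring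
          _ ≤ A₀ ^ 2 * (G k * (((3 : ℝ) / m) ^ t * ((l : ℝ) ^ (-t) + ((m - k - l : ℕ) : ℝ) ^ (-t)))) := by
              apply mul_le_mul hA2
              · exact mul_le_mul_of_nonneg_left hprod (hGnn k)
              · exact mul_nonneg (hGnn k) (mul_nonneg (hrnn _) (hrnn _))
              · positivity
          _ = A₀ ^ 2 * ((3 : ℝ) / m) ^ t * (G k * ((l : ℝ) ^ (-t) + ((m - k - l : ℕ) : ℝ) ^ (-t))) := by
              ring
          _ ≤ A₀ ^ 2 * ((3 : ℝ) / m) ^ t * (U1 k l + U2 k l + U3 k l) := by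
              apply mul_le_mul_of_nonneg_left hsel
              positivity
      · -- l is minimal
        have hprod : (k : ℝ) ^ (-t) * ((m - k - l : ℕ) : ℝ) ^ (-t)
            ≤ ((3 : ℝ) / m) ^ t * ((k : ℝ) ^ (-t) + ((m - k - l : ℕ) : ℝ) ^ (-t)) :=
          prod_bd hk1 hj1 (by omega) (by omega) ht0.le
        have hsel : G l * ((k : ℝ) ^ (-t) + ((m - k - l : ℕ) : ℝ) ^ (-t))
            ≤ U1 k l + U2 k l + U3 k l := by
          have e1 : U2 k l = G l * ((k : ℝ) ^ (-t) + ((m - k - l : ℕ) : ℝ) ^ (-t)) := by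
            rw [hU2]; dsimp only
            rw [if_pos ⟨by omega, by omega⟩, hmax]
          rw [e1]
          linarith [hU1nn k l, hU3nn k l]
        calc G k * G l * G (m - k - l)
            ≤ (A * (k : ℝ) ^ (-t)) * G l * (A * ((m - k - l : ℕ) : ℝ) ^ (-t)) := by
              apply mul_le_mul
              · exact mul_le_mul_of_nonneg_right (hGle k hk1) (hGnn l)
              · exact hGle _ hj1
              · exact hGnn _
              · exact mul_nonneg (mul_nonneg hApos.le (hrnn k)) (hGnn l)
          _ = (A * A) * (G l * ((k : ℝ) ^ (-t) * ((m - k - l : ℕ) : ℝ) ^ (-t))) := by ring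
          _ ≤ A₀ ^ 2 * (G l * (((3 : ℝ) / m) ^ t * ((k : ℝ) ^ (-t) + ((m - k - l : ℕ) : ℝ) ^ (-t)))) := by
              apply mul_le_mul hA2
              · exact mul_le_mul_of_nonneg_left hprod (hGnn l)
              · exact mul_nonneg (hGnn l) (mul_nonneg (hrnn _) (hrnn _))
              · positivity
          _ = A₀ ^ 2 * ((3 : ℝ) / m) ^ t * (G l * ((k : ℝ) ^ (-t) + ((m - k - l : ℕ) : ℝ) ^ (-t))) := by
              ring
          _ ≤ A₀ ^ 2 * ((3 : ℝ) / m) ^ t * (U1 k l + U2 k l + U3 k l) := by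
              apply mul_le_mul_of_nonneg_left hsel
              positivity
      · -- j is minimal
        have hprod : (k : ℝ) ^ (-t) * (l : ℝ) ^ (-t)
            ≤ ((3 : ℝ) / m) ^ t * ((k : ℝ) ^ (-t) + (l : ℝ) ^ (-t)) :=
          prod_bd hk1 hl1 (by omega) (by omega) ht0.le
        have hsel : G (m - k - l) * ((k : ℝ) ^ (-t) + (l : ℝ) ^ (-t))
            ≤ U1 k l + U2 k l + U3 k l := by
          have e1 : U3 k l = G (m - k - l) * ((k : ℝ) ^ (-t) + (l : ℝ) ^ (-t)) := by
            rw [hU3]; dsimp only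
            rw [if_pos ⟨by omega, by omega⟩, hmax]
          rw [e1]
          linarith [hU1nn k l, hU2nn k l]
        calc G k * G l * G (m - k - l)
            ≤ (A * (k : ℝ) ^ (-t)) * (A * (l : ℝ) ^ (-t)) * G (m - k - l) := by
              apply mul_le_mul
              · apply mul_le_mul (hGle k hk1) (hGle l hl1) (hGnn l)
                exact mul_nonneg hApos.le (hrnn k)
              · exact le_refl _
              · exact hGnn _
              · exact mul_nonneg (mul_nonneg hApos.le (hrnn k)) (mul_nonneg hApos.le (hrnn l))
          _ = (A * A) * (G (m - k - l) * ((k : ℝ) ^ (-t) * (l : ℝ) ^ (-t))) := by ring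
          _ ≤ A₀ ^ 2 * (G (m - k - l) * (((3 : ℝ) / m) ^ t * ((k : ℝ) ^ (-t) + (l : ℝ) ^ (-t)))) := by
              apply mul_le_mul hA2
              · exact mul_le_mul_of_nonneg_left hprod (hGnn _)
              · exact mul_nonneg (hGnn _) (mul_nonneg (hrnn _) (hrnn _))
              · positivity
          _ = A₀ ^ 2 * ((3 : ℝ) / m) ^ t * (G (m - k - l) * ((k : ℝ) ^ (-t) + (l : ℝ) ^ (-t))) := by
              ring
          _ ≤ A₀ ^ 2 * ((3 : ℝ) / m) ^ t * (U1 k l + U2 k l + U3 k l) := by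
              apply mul_le_mul_of_nonneg_left hsel
              positivity
  -- Σ : the target sum
  set Sig : ℝ := ∑ k ∈ Finset.Icc 1 (m / 2), (k : ℝ) ^ (1 - t) * G k with hSig
  have hSignn : 0 ≤ Sig := by
    rw [hSig]
    apply Finset.sum_nonneg
    intro k _
    exact mul_nonneg (Real.rpow_nonneg (Nat.cast_nonneg k) _) (hGnn k)
  -- bound for the S1 piece
  have hS1 : (∑ k ∈ Finset.range m, ∑ l ∈ Finset.Icc 1 (m - 1 - k), U1 k l)
      ≤ 4 * C * Sig := by
    have inner1 : ∀ k ∈ Finset.range m, ∑ l ∈ Finset.Icc 1 (m - 1 - k), U1 k l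
        ≤ (if 2 * max k 1 ≤ m then 2 * C * ((max k 1 : ℕ) : ℝ) ^ (1 - t) * G (max k 1) else 0) := by
      intro k hk
      have hkm : k < m := Finset.mem_range.mp hk
      by_cases h2 : 2 * max k 1 ≤ m
      · rw [if_pos h2]
        set a := max k 1 with ha_def
        have ha1 : 1 ≤ a := le_max_right k 1
        have split1 : ∀ l, U1 k l =
            (if (a ≤ l ∧ a ≤ m - k - l) then (l : ℝ) ^ (-t) else 0) * G a
            + (if (a ≤ l ∧ a ≤ m - k - l) then ((m - k - l : ℕ) : ℝ) ^ (-t) else 0) * G a := by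
          intro l
          rw [hU1]; dsimp only
          rw [← ha_def]
          split
          · ring
          · simp
        have hsum1 : ∑ l ∈ Finset.Icc 1 (m - 1 - k),
            (if (a ≤ l ∧ a ≤ m - k - l) then (l : ℝ) ^ (-t) else 0) ≤ C * (a : ℝ) ^ (1 - t) := by
          rw [← Finset.sum_filter]
          calc ∑ l ∈ (Finset.Icc 1 (m - 1 - k)).filter (fun l => a ≤ l ∧ a ≤ m - k - l),
                (l : ℝ) ^ (-t)
              ≤ ∑ b ∈ Finset.Icc a m, (b : ℝ) ^ (-t) := by
                apply Finset.sum_le_sum_of_subset_of_nonneg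
                · intro l hl
                  simp only [Finset.mem_filter, Finset.mem_Icc] at hl ⊢
                  omega
                · intro b _ _
                  exact hrnn b
            _ ≤ C * (a : ℝ) ^ (1 - t) := hC a m ha1
        have hsum2 : ∑ l ∈ Finset.Icc 1 (m - 1 - k),
            (if (a ≤ l ∧ a ≤ m - k - l) then ((m - k - l : ℕ) : ℝ) ^ (-t) else 0)
            ≤ C * (a : ℝ) ^ (1 - t) := by
          rw [← Finset.sum_filter]
          calc ∑ l ∈ (Finset.Icc 1 (m - 1 - k)).filter (fun l => a ≤ l ∧ a ≤ m - k - l),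
                ((m - k - l : ℕ) : ℝ) ^ (-t)
              ≤ ∑ b ∈ Finset.Icc a m, (b : ℝ) ^ (-t) := by
                apply sum_le_sum_inj _ hrnn
                · intro l1 hl1 l2 hl2 hee
                  simp only [Finset.mem_filter, Finset.mem_Icc] at hl1 hl2
                  omega
                · intro l hl
                  simp only [Finset.mem_filter, Finset.mem_Icc] at hl ⊢
                  omega
            _ ≤ C * (a : ℝ) ^ (1 - t) := hC a m ha1
        calc ∑ l ∈ Finset.Icc 1 (m - 1 - k), U1 k l
            = (∑ l ∈ Finset.Icc 1 (m - 1 - k),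
                (if (a ≤ l ∧ a ≤ m - k - l) then (l : ℝ) ^ (-t) else 0)) * G a
              + (∑ l ∈ Finset.Icc 1 (m - 1 - k),
                (if (a ≤ l ∧ a ≤ m - k - l) then ((m - k - l : ℕ) : ℝ) ^ (-t) else 0)) * G a := by
              rw [Finset.sum_mul, Finset.sum_mul, ← Finset.sum_add_distrib]
              exact Finset.sum_congr rfl (fun l _ => split1 l)
          _ ≤ (C * (a : ℝ) ^ (1 - t)) * G a + (C * (a : ℝ) ^ (1 - t)) * G a := by
              apply add_le_add <;> exact mul_le_mul_of_nonneg_right (by assumption) (hGnn a)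
          _ = 2 * C * ((a : ℕ) : ℝ) ^ (1 - t) * G a := by ring
      · rw [if_neg h2]
        apply le_of_eq
        apply Finset.sum_eq_zero
        intro l hl
        obtain ⟨hl1, hl2⟩ := Finset.mem_Icc.mp hl
        rw [hU1]; dsimp only
        rw [if_neg]
        rintro ⟨hh1, hh2⟩
        omega
    calc (∑ k ∈ Finset.range m, ∑ l ∈ Finset.Icc 1 (m - 1 - k), U1 k l)
        ≤ ∑ k ∈ Finset.range m,
            (if 2 * max k 1 ≤ m then 2 * C * ((max k 1 : ℕ) : ℝ) ^ (1 - t) * G (max k 1) else 0) :=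
          Finset.sum_le_sum inner1
      _ ≤ 4 * C * Sig := by
          -- split off k = 0
          have hm1 : m - 1 + 1 = m := by omega
          have hsplit := Finset.sum_range_succ'
            (fun k => (if 2 * max k 1 ≤ m then 2 * C * ((max k 1 : ℕ) : ℝ) ^ (1 - t) * G (max k 1) else 0))
            (m - 1)
          rw [hm1] at hsplit
          rw [hsplit]
          have hzero : (if 2 * max 0 1 ≤ m then 2 * C * ((max 0 1 : ℕ) : ℝ) ^ (1 - t) * G (max 0 1) else 0)
              = 2 * C * ((1 : ℕ) : ℝ) ^ (1 - t) * G 1 := by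
            rw [if_pos (by omega : 2 * max 0 1 ≤ m)]
            norm_num
          have hmax2 : ∀ i : ℕ, max (i + 1) 1 = i + 1 := fun i => max_eq_left (by omega)
          have hrw : ∀ i : ℕ,
              (if 2 * max (i + 1) 1 ≤ m then 2 * C * ((max (i + 1) 1 : ℕ) : ℝ) ^ (1 - t) * G (max (i + 1) 1) else 0)
              = (fun b => if 2 * b ≤ m then 2 * C * ((b : ℕ) : ℝ) ^ (1 - t) * G b else 0) (i + 1) := by
            intro i
            rw [hmax2 i]
          have hbnn : ∀ b : ℕ, 0 ≤ (if 2 * b ≤ m then 2 * C * ((b : ℕ) : ℝ) ^ (1 - t) * G b else 0) := by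
            intro b
            split
            · apply mul_nonneg (mul_nonneg (by linarith) (Real.rpow_nonneg (Nat.cast_nonneg b) _)) (hGnn b)
            · exact le_refl 0
          have hmain : (∑ i ∈ Finset.range (m - 1),
              (if 2 * max (i + 1) 1 ≤ m then 2 * C * ((max (i + 1) 1 : ℕ) : ℝ) ^ (1 - t) * G (max (i + 1) 1) else 0))
              ≤ 2 * C * Sig := by
            calc (∑ i ∈ Finset.range (m - 1),
                (if 2 * max (i + 1) 1 ≤ m then 2 * C * ((max (i + 1) 1 : ℕ) : ℝ) ^ (1 - t) * G (max (i + 1) 1) else 0))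
                = ∑ i ∈ Finset.range (m - 1),
                  (fun b => if 2 * b ≤ m then 2 * C * ((b : ℕ) : ℝ) ^ (1 - t) * G b else 0) (i + 1) :=
                  Finset.sum_congr rfl (fun i _ => hrw i)
              _ ≤ ∑ b ∈ Finset.Icc 1 (m - 1),
                  (if 2 * b ≤ m then 2 * C * ((b : ℕ) : ℝ) ^ (1 - t) * G b else 0) := by
                  apply sum_le_sum_inj _ hbnn
                  · intro a _ b _ h
                    omega
                  · intro i hi
                    simp only [Finset.mem_range] at hi
                    simp only [Finset.mem_Icc]
                    omega
              _ = ∑ b ∈ (Finset.Icc 1 (m - 1)).filter (fun b => 2 * b ≤ m),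
                  2 * C * ((b : ℕ) : ℝ) ^ (1 - t) * G b := (Finset.sum_filter _ _).symm
              _ = ∑ b ∈ Finset.Icc 1 (m / 2), 2 * C * ((b : ℕ) : ℝ) ^ (1 - t) * G b := by
                  congr 1
                  ext b
                  simp only [Finset.mem_filter, Finset.mem_Icc]
                  omega
              _ = 2 * C * Sig := by
                  rw [hSig, Finset.mul_sum]
                  exact Finset.sum_congr rfl (fun b _ => by ring)
          have hzero_le : 2 * C * ((1 : ℕ) : ℝ) ^ (1 - t) * G 1 ≤ 2 * C * Sig := by
            have h1mem : 1 ∈ Finset.Icc 1 (m / 2) := by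
              simp only [Finset.mem_Icc]
              omega
            have := Finset.single_le_sum
              (f := fun k : ℕ => (k : ℝ) ^ (1 - t) * G k)
              (fun k _ => mul_nonneg (Real.rpow_nonneg (Nat.cast_nonneg k) _) (hGnn k)) h1mem
            rw [hSig]
            calc 2 * C * ((1 : ℕ) : ℝ) ^ (1 - t) * G 1
                = 2 * C * (((1:ℕ) : ℝ) ^ (1 - t) * G 1) := by ring
              _ ≤ 2 * C * ∑ k ∈ Finset.Icc 1 (m / 2), (k : ℝ) ^ (1 - t) * G k := by
                  apply mul_le_mul_of_nonneg_left _ (by linarith)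
                  simpa using this
          rw [hzero]
          linarith
  -- bound for the S2 piece
  have hS2 : (∑ k ∈ Finset.range m, ∑ l ∈ Finset.Icc 1 (m - 1 - k), U2 k l)
      ≤ (2 * C + 1) * Sig := by
    have ext1 : ∀ k ∈ Finset.range m, ∑ l ∈ Finset.Icc 1 (m - 1 - k), U2 k l
        ≤ ∑ l ∈ Finset.Icc 1 m, U2 k l := by
      intro k _
      apply Finset.sum_le_sum_of_subset_of_nonneg
      · exact Finset.Icc_subset_Icc le_rfl (by omega)
      · intro l _ _
        exact hU2nn k l
    have inner2 : ∀ l ∈ Finset.Icc 1 m, ∑ k ∈ Finset.range m, U2 k l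
        ≤ (if 2 * l ≤ m then (2 * C + 1) * (l : ℝ) ^ (1 - t) * G l else 0) := by
      intro l hl
      obtain ⟨hl1, hlm⟩ := Finset.mem_Icc.mp hl
      by_cases h2l : 2 * l ≤ m
      · rw [if_pos h2l]
        have split2 : ∀ k, U2 k l =
            (if (l ≤ max k 1 ∧ l ≤ m - k - l) then ((max k 1 : ℕ) : ℝ) ^ (-t) else 0) * G l
            + (if (l ≤ max k 1 ∧ l ≤ m - k - l) then ((m - k - l : ℕ) : ℝ) ^ (-t) else 0) * G l := by
          intro k
          rw [hU2]; dsimp only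
          split
          · ring
          · simp
        have hm1 : m - 1 + 1 = m := by omega
        -- first sum
        have hsumA : ∑ k ∈ Finset.range m,
            (if (l ≤ max k 1 ∧ l ≤ m - k - l) then ((max k 1 : ℕ) : ℝ) ^ (-t) else 0)
            ≤ (C + 1) * (l : ℝ) ^ (1 - t) := by
          have hsplit := Finset.sum_range_succ'
            (fun k => (if (l ≤ max k 1 ∧ l ≤ m - k - l) then ((max k 1 : ℕ) : ℝ) ^ (-t) else 0))
            (m - 1)
          rw [hm1] at hsplit
          rw [hsplit]
          have hterm0 : (if (l ≤ max 0 1 ∧ l ≤ m - 0 - l) then ((max 0 1 : ℕ) : ℝ) ^ (-t) else 0)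
              ≤ (l : ℝ) ^ (1 - t) := by
            split
            · next hcond =>
              have : l = 1 := by omega
              subst this
              norm_num
            · exact Real.rpow_nonneg (Nat.cast_nonneg l) _
          have hmainA : (∑ i ∈ Finset.range (m - 1),
              (if (l ≤ max (i + 1) 1 ∧ l ≤ m - (i + 1) - l) then ((max (i + 1) 1 : ℕ) : ℝ) ^ (-t) else 0))
              ≤ C * (l : ℝ) ^ (1 - t) := by
            have hrwA : ∀ i : ℕ,
                (if (l ≤ max (i + 1) 1 ∧ l ≤ m - (i + 1) - l) then ((max (i + 1) 1 : ℕ) : ℝ) ^ (-t) else 0)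
                = (if (l ≤ i + 1 ∧ l ≤ m - (i + 1) - l) then ((i + 1 : ℕ) : ℝ) ^ (-t) else 0) := by
              intro i
              rw [max_eq_left (by omega : 1 ≤ i + 1)]
            calc (∑ i ∈ Finset.range (m - 1),
                (if (l ≤ max (i + 1) 1 ∧ l ≤ m - (i + 1) - l) then ((max (i + 1) 1 : ℕ) : ℝ) ^ (-t) else 0))
                = ∑ i ∈ Finset.range (m - 1),
                  (if (l ≤ i + 1 ∧ l ≤ m - (i + 1) - l) then ((i + 1 : ℕ) : ℝ) ^ (-t) else 0) :=
                  Finset.sum_congr rfl (fun i _ => hrwA i)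
              _ = ∑ i ∈ (Finset.range (m - 1)).filter (fun i => l ≤ i + 1 ∧ l ≤ m - (i + 1) - l),
                  ((i + 1 : ℕ) : ℝ) ^ (-t) := (Finset.sum_filter _ _).symm
              _ ≤ ∑ b ∈ Finset.Icc l m, (b : ℝ) ^ (-t) := by
                  apply sum_le_sum_inj _ hrnn
                  · intro a _ b _ h
                    omega
                  · intro i hi
                    simp only [Finset.mem_filter, Finset.mem_range] at hi
                    simp only [Finset.mem_Icc]
                    omega
              _ ≤ C * (l : ℝ) ^ (1 - t) := hC l m hl1
          linarith
        -- second sum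
        have hsumB : ∑ k ∈ Finset.range m,
            (if (l ≤ max k 1 ∧ l ≤ m - k - l) then ((m - k - l : ℕ) : ℝ) ^ (-t) else 0)
            ≤ C * (l : ℝ) ^ (1 - t) := by
          calc ∑ k ∈ Finset.range m,
              (if (l ≤ max k 1 ∧ l ≤ m - k - l) then ((m - k - l : ℕ) : ℝ) ^ (-t) else 0)
              = ∑ k ∈ (Finset.range m).filter (fun k => l ≤ max k 1 ∧ l ≤ m - k - l),
                ((m - k - l : ℕ) : ℝ) ^ (-t) := (Finset.sum_filter _ _).symm
            _ ≤ ∑ b ∈ Finset.Icc l m, (b : ℝ) ^ (-t) := by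
                apply sum_le_sum_inj _ hrnn
                · intro a ha b hb h
                  simp only [Finset.mem_filter, Finset.mem_range] at ha hb
                  omega
                · intro k hk
                  simp only [Finset.mem_filter, Finset.mem_range] at hk
                  simp only [Finset.mem_Icc]
                  omega
            _ ≤ C * (l : ℝ) ^ (1 - t) := hC l m hl1
        calc ∑ k ∈ Finset.range m, U2 k l
            = (∑ k ∈ Finset.range m,
                (if (l ≤ max k 1 ∧ l ≤ m - k - l) then ((max k 1 : ℕ) : ℝ) ^ (-t) else 0)) * G l
              + (∑ k ∈ Finset.range m,
                (if (l ≤ max k 1 ∧ l ≤ m - k - l) then ((m - k - l : ℕ) : ℝ) ^ (-t) else 0)) * G l := by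
              rw [Finset.sum_mul, Finset.sum_mul, ← Finset.sum_add_distrib]
              exact Finset.sum_congr rfl (fun k _ => split2 k)
          _ ≤ ((C + 1) * (l : ℝ) ^ (1 - t)) * G l + (C * (l : ℝ) ^ (1 - t)) * G l := by
              apply add_le_add <;> exact mul_le_mul_of_nonneg_right (by assumption) (hGnn l)
          _ = (2 * C + 1) * (l : ℝ) ^ (1 - t) * G l := by ring
      · rw [if_neg h2l]
        apply le_of_eq
        apply Finset.sum_eq_zero
        intro k _
        rw [hU2]; dsimp only
        rw [if_neg]
        rintro ⟨hh1, hh2⟩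
        omega
    calc (∑ k ∈ Finset.range m, ∑ l ∈ Finset.Icc 1 (m - 1 - k), U2 k l)
        ≤ ∑ k ∈ Finset.range m, ∑ l ∈ Finset.Icc 1 m, U2 k l := Finset.sum_le_sum ext1
      _ = ∑ l ∈ Finset.Icc 1 m, ∑ k ∈ Finset.range m, U2 k l := Finset.sum_comm
      _ ≤ ∑ l ∈ Finset.Icc 1 m, (if 2 * l ≤ m then (2 * C + 1) * (l : ℝ) ^ (1 - t) * G l else 0) :=
          Finset.sum_le_sum inner2
      _ = ∑ l ∈ (Finset.Icc 1 m).filter (fun l => 2 * l ≤ m),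
          (2 * C + 1) * (l : ℝ) ^ (1 - t) * G l := (Finset.sum_filter _ _).symm
      _ = ∑ l ∈ Finset.Icc 1 (m / 2), (2 * C + 1) * (l : ℝ) ^ (1 - t) * G l := by
          congr 1
          ext b
          simp only [Finset.mem_filter, Finset.mem_Icc]
          omega
      _ = (2 * C + 1) * Sig := by
          rw [hSig, Finset.mul_sum]
          exact Finset.sum_congr rfl (fun b _ => by ring)
  -- S3 = S2
  have hS32 : (∑ k ∈ Finset.range m, ∑ l ∈ Finset.Icc 1 (m - 1 - k), U3 k l)
      = ∑ k ∈ Finset.range m, ∑ l ∈ Finset.Icc 1 (m - 1 - k), U2 k l := by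
    apply Finset.sum_congr rfl
    intro k hk
    have hkm : k < m := Finset.mem_range.mp hk
    apply Finset.sum_nbij' (i := fun l => m - k - l) (j := fun l => m - k - l)
    · intro l hl
      simp only [Finset.mem_Icc] at hl ⊢
      omega
    · intro l hl
      simp only [Finset.mem_Icc] at hl ⊢
      omega
    · intro l hl
      simp only [Finset.mem_Icc] at hl
      omega
    · intro l hl
      simp only [Finset.mem_Icc] at hl
      omega
    · intro l hl
      simp only [Finset.mem_Icc] at hl
      rw [hU2, hU3]; dsimp only
      have hrw : m - k - (m - k - l) = l := by omega
      rw [hrw]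
  -- combine
  have total : (∑ k ∈ Finset.range m, ∑ l ∈ Finset.Icc 1 (m - 1 - k), G k * G l * G (m - k - l))
      ≤ A₀ ^ 2 * ((3 : ℝ) / m) ^ t * ((8 * C + 2) * Sig) := by
    calc (∑ k ∈ Finset.range m, ∑ l ∈ Finset.Icc 1 (m - 1 - k), G k * G l * G (m - k - l))
        ≤ ∑ k ∈ Finset.range m, ∑ l ∈ Finset.Icc 1 (m - 1 - k),
            A₀ ^ 2 * ((3 : ℝ) / m) ^ t * (U1 k l + U2 k l + U3 k l) := by
          apply Finset.sum_le_sum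
          intro k hk
          exact Finset.sum_le_sum (master k hk)
      _ = A₀ ^ 2 * ((3 : ℝ) / m) ^ t * ∑ k ∈ Finset.range m, ∑ l ∈ Finset.Icc 1 (m - 1 - k),
            (U1 k l + U2 k l + U3 k l) := by
          rw [Finset.mul_sum]
          apply Finset.sum_congr rfl
          intro k _
          rw [Finset.mul_sum]
      _ = A₀ ^ 2 * ((3 : ℝ) / m) ^ t *
            ((∑ k ∈ Finset.range m, ∑ l ∈ Finset.Icc 1 (m - 1 - k), U1 k l)
            + (∑ k ∈ Finset.range m, ∑ l ∈ Finset.Icc 1 (m - 1 - k), U2 k l)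
            + (∑ k ∈ Finset.range m, ∑ l ∈ Finset.Icc 1 (m - 1 - k), U3 k l)) := by
          simp only [Finset.sum_add_distrib]
      _ ≤ A₀ ^ 2 * ((3 : ℝ) / m) ^ t * ((8 * C + 2) * Sig) := by
          apply mul_le_mul_of_nonneg_left _ (by positivity)
          rw [hS32]
          linarith
  calc (∑ k ∈ Finset.range m, ∑ l ∈ Finset.Icc 1 (m - 1 - k), G k * G l * G (m - k - l))
      ≤ A₀ ^ 2 * ((3 : ℝ) / m) ^ t * ((8 * C + 2) * Sig) := total
    _ = (A₀ ^ 2 * 3 ^ t * (8 * C + 2)) * (m : ℝ) ^ (-t) * Sig := by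
        rw [Real.div_rpow (by norm_num) hm0.le, Real.rpow_neg hm0.le]
        have hmt : (0:ℝ) < (m : ℝ) ^ t := Real.rpow_pos_of_pos hm0 t
        field_simp
    _ = (A₀ ^ 2 * 3 ^ t * (8 * C + 2)) * (m : ℝ) ^ (-t) *
          ∑ k ∈ Finset.Icc 1 (m / 2), (k : ℝ) ^ (1 - t) * G k := by rw [hSig]

/-- The two-edge lace diagram bound `P_m^{(2)}(x) ≤ K ψ_m(x)` for `d ≥ 5`:
`∑_{k+l+j=m, l,j≥1} φ_{kν}(x)φ_{lν}(x)φ_{jν}(x)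
  ≤ K m^{-d/2} ∑_{k=1}^{⌊m/2⌋} k^{1-d/2} φ_{kν}(x)`. -/
theorem two_edge_diagram_bound (d : ℕ) (hd : 5 ≤ d) :
    ∃ K : ℝ, 0 < K ∧ ∀ ν : ℝ, 1 / (2 * d) ≤ ν → ∀ m : ℕ, 2 ≤ m → ∀ x : Fin d → ℤ,
      (∑ k ∈ Finset.range m, ∑ l ∈ Finset.Icc 1 (m - 1 - k),
        gauss' d ((k : ℝ) * ν) x * gauss' d ((l : ℝ) * ν) x *
          gauss' d (((m - k - l : ℕ) : ℝ) * ν) x)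
        ≤ K * (m : ℝ) ^ (-(d : ℝ) / 2) *
            ∑ k ∈ Finset.Icc 1 (m / 2), (k : ℝ) ^ (1 - (d : ℝ) / 2) * gauss' d ((k : ℝ) * ν) x := by
  obtain ⟨C, hC1, hC⟩ := tail_bound d hd
  have hd0 : (0 : ℝ) < d := by exact_mod_cast (by omega : 0 < d)
  set A₀ : ℝ := (2 * (d : ℝ)) ^ ((d : ℝ) / 2) with hA₀def
  have hd5 : (5 : ℝ) ≤ (d : ℝ) := by exact_mod_cast hd
  have hA₀1 : 1 ≤ A₀ := Real.one_le_rpow (by linarith) (by positivity)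
  refine ⟨A₀ ^ 2 * 3 ^ ((d : ℝ) / 2) * (8 * C + 2), ?_, ?_⟩
  · have h3 : (0:ℝ) < (3:ℝ) ^ ((d : ℝ) / 2) := Real.rpow_pos_of_pos (by norm_num) _
    have hA₀pos : (0:ℝ) < A₀ := by linarith
    have : (0:ℝ) < 8 * C + 2 := by linarith
    positivity
  intro ν hν m hm x
  have hν0 : 0 < ν := lt_of_lt_of_le (by positivity : (0:ℝ) < 1 / (2 * (d:ℝ))) hν
  have h2πν : (0 : ℝ) < 2 * Real.pi * ν := by
    have := Real.pi_pos
    positivity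
  set A : ℝ := (2 * Real.pi * ν) ^ (-((d : ℝ) / 2)) with hA
  have hApos : 0 < A := Real.rpow_pos_of_pos h2πν _
  have hAle : A ≤ A₀ := by
    have hπ : (1 : ℝ) ≤ 2 * Real.pi := by
      have := Real.pi_gt_three
      linarith
    have h1 : 1 / (2 * (d : ℝ)) ≤ 2 * Real.pi * ν := by
      calc 1 / (2 * (d : ℝ)) ≤ ν := hν
        _ = 1 * ν := (one_mul ν).symm
        _ ≤ 2 * Real.pi * ν := mul_le_mul_of_nonneg_right hπ hν0.le
    calc A ≤ (1 / (2 * (d : ℝ))) ^ (-((d : ℝ) / 2)) :=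
        Real.rpow_le_rpow_of_nonpos (by positivity) h1 (neg_nonpos.mpr (by positivity))
      _ = A₀ := by
        rw [hA₀def, one_div, Real.inv_rpow (by positivity), Real.rpow_neg (by positivity), inv_inv]
  have hGnn : ∀ n : ℕ, 0 ≤ gauss' d ((n : ℝ) * ν) x := by
    intro n
    exact gauss'_nonneg d (mul_nonneg (Nat.cast_nonneg n) hν0.le) x
  have hGle : ∀ n : ℕ, 1 ≤ n →
      gauss' d ((n : ℝ) * ν) x ≤ A * (n : ℝ) ^ (-((d : ℝ) / 2)) := by
    intro n hn
    have hn0 : (0 : ℝ) < n := by exact_mod_cast hn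
    have hη : 0 < (n : ℝ) * ν := mul_pos hn0 hν0
    calc gauss' d ((n : ℝ) * ν) x ≤ (2 * Real.pi * ((n : ℝ) * ν)) ^ (-(d : ℝ) / 2) :=
        gauss'_le d hη x
      _ = A * (n : ℝ) ^ (-((d : ℝ) / 2)) := by
        rw [show (2 * Real.pi * ((n : ℝ) * ν)) = (2 * Real.pi * ν) * (n : ℝ) by ring,
          show -(d : ℝ) / 2 = -((d : ℝ) / 2) by rw [neg_div],
          Real.mul_rpow h2πν.le hn0.le, hA]
  have hG0 : gauss' d ((0 : ℕ) * ν) x ≤ A⁻¹ * gauss' d ((1 : ℕ) * ν) x := by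
    have h := gauss'_zero_le d hν0 x
    have e0 : ((0 : ℕ) : ℝ) * ν = 0 := by push_cast; ring
    have e1 : ((1 : ℕ) : ℝ) * ν = ν := by push_cast; ring
    rw [e0, e1]
    have hAinv : A⁻¹ = (2 * Real.pi * ν) ^ ((d : ℝ) / 2) := by
      rw [hA, Real.rpow_neg h2πν.le, inv_inv]
    rw [hAinv]
    exact h
  exact core_bound d hd C hC1 hC m hm (fun n => gauss' d ((n : ℝ) * ν) x) A A₀
    hApos hA₀1 hAle hGnn hGle hG0
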